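/- If K_1 and K_2 are two distinct completely connected components of a finite simplicial complex K, then dim(K_1 ∩ K_2) < min{dim K_1, dim K_2}. -/

import Mathlib

open Finset

/-- A finite abstract simplicial complex with vertices in `ℕ`. -/
structure SC where
  faces : Finset (Finset ℕ)
  down_closed : ∀ ⦃s t : Finset ℕ⦄, s ∈ faces → t ⊆ s → t ∈ faces

namespace SC

/-- The vertex set of a simplicial complex. -/
def verts (K : SC) : Finset ℕ := K.faces.sup id

/-- The dimension of a simplicial complex (dimension of `{∅}` is `-1`). -/
def dim (K : SC) : ℤ := ((K.faces.sup Finset.card : ℕ) : ℤ) - 1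

/-- The link of a simplex. -/
def link (K : SC) (σ : Finset ℕ) : SC where
  faces := K.faces.filter fun t => σ ∪ t ∈ K.faces ∧ Disjoint σ t
  down_closed := by
    intro s t hs hts
    simp only [mem_filter] at hs ⊢
    refine ⟨K.down_closed hs.1 hts, K.down_closed hs.2.1 (union_subset_union_right hts),
      hs.2.2.mono_right ?_⟩
    exact_mod_cast hts

/-- `K₁` is a subcomplex of `K`. -/
def IsSub (K₁ K : SC) : Prop := K₁.faces ⊆ K.faces

/-- Union of two simplicial complexes. -/
def union (K L : SC) : SC where
  faces := K.faces ∪ L.faces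
  down_closed := by
    intro s t hs hts
    rcases mem_union.mp hs with h | h
    · exact mem_union_left _ (K.down_closed h hts)
    · exact mem_union_right _ (L.down_closed h hts)

/-- Intersection of two simplicial complexes. -/
def inter (K L : SC) : SC where
  faces := K.faces ∩ L.faces
  down_closed := by
    intro s t hs hts
    rw [mem_inter] at hs ⊢
    exact ⟨K.down_closed hs.1 hts, L.down_closed hs.2 hts⟩

/-- The join of two simplicial complexes. -/
def join (K L : SC) : SC where
  faces := (K.faces ×ˢ L.faces).image fun x => x.1 ∪ x.2
  down_closed := by
    intro s t hs hts
    simp only [mem_image, mem_product] at hs ⊢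
    obtain ⟨⟨a, b⟩, ⟨ha, hb⟩, rfl⟩ := hs
    refine ⟨⟨t ∩ a, t \ a⟩, ⟨K.down_closed ha inter_subset_right,
      L.down_closed hb fun x hx => ?_⟩, ?_⟩
    · rcases mem_union.mp (hts (mem_sdiff.mp hx).1) with h | h
      · exact absurd h (mem_sdiff.mp hx).2
      · exact h
    · ext x
      simp only [mem_union, mem_inter, mem_sdiff]
      constructor
      · rintro (⟨h, _⟩ | ⟨h, _⟩) <;> exact h
      · intro hx
        by_cases hxa : x ∈ a
        · exact Or.inl ⟨hx, hxa⟩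
        · exact Or.inr ⟨hx, hxa⟩

end SC
namespace SC
open Finset

/-- Two equal-dimensional simplices of `K₁` are adjacent if they share a common
codimension-one face (a common facet). -/
def cAdj (K₁ : SC) (s t : Finset ℕ) : Prop :=
  s ∈ K₁.faces ∧ t ∈ K₁.faces ∧ s.card = t.card ∧ (s ∩ t).card + 1 = s.card

/-- `K₁` is completely connected: any two simplices of the same dimension are
joined by a chain of simplices of that dimension, consecutive ones sharing a
common facet. -/
def CompConn (K₁ : SC) : Prop :=
  ∀ s ∈ K₁.faces, ∀ t ∈ K₁.faces, s.card = t.card → Relation.ReflTransGen (cAdj K₁) s t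

/-- `K₁` is a completely connected component of `K`: a maximal completely
connected subcomplex. -/
def IsCCComp (K K₁ : SC) : Prop :=
  K₁.IsSub K ∧ CompConn K₁ ∧ ∀ K₂ : SC, K₂.IsSub K → CompConn K₂ → K₁.IsSub K₂ → K₂ = K₁

end SC
/-- Two distinct completely connected components intersect in
dimension strictly less than either of their dimensions. -/
theorem ccc_inter_dim_lt (K K₁ K₂ : SC)
    (h₁ : SC.IsCCComp K K₁) (h₂ : SC.IsCCComp K K₂) (hne : K₁ ≠ K₂) :
    (K₁.inter K₂).dim < min K₁.dim K₂.dim := by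
  by_contra hlt
  push_neg at hlt
  apply hne
  have hN : min (K₁.faces.sup Finset.card) (K₂.faces.sup Finset.card)
      ≤ (K₁.inter K₂).faces.sup Finset.card := by
    simp only [SC.dim] at hlt
    omega
  -- bridge: given faces of equal card in K₁ and K₂, there is a common face of that card
  have bridge : ∀ s ∈ K₁.faces, ∀ t ∈ K₂.faces,
      ∃ σ ∈ (K₁.inter K₂).faces, σ.card = s.card ⊓ t.card := by
    intro s hs t ht
    have hk1 : s.card ≤ K₁.faces.sup Finset.card := Finset.le_sup hs
    have hk2 : t.card ≤ K₂.faces.sup Finset.card := Finset.le_sup ht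
    have hkI : s.card ⊓ t.card ≤ (K₁.inter K₂).faces.sup Finset.card :=
      le_trans (min_le_min hk1 hk2) hN
    have hne' : (K₁.inter K₂).faces.Nonempty := by
      refine ⟨∅, ?_⟩
      exact Finset.mem_inter.mpr ⟨K₁.down_closed hs (Finset.empty_subset _),
        K₂.down_closed ht (Finset.empty_subset _)⟩
    obtain ⟨σ, hσ, hσc⟩ := Finset.exists_mem_eq_sup _ hne' Finset.card
    rw [hσc] at hkI
    obtain ⟨σ', hσ'σ, hσ'c⟩ := Finset.exists_subset_card_eq hkI
    exact ⟨σ', (K₁.inter K₂).down_closed hσ hσ'σ, hσ'c⟩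
  have mono1 : ∀ a b, SC.cAdj K₁ a b → SC.cAdj (K₁.union K₂) a b := by
    rintro a b ⟨ha, hb, h⟩
    exact ⟨Finset.mem_union_left _ ha, Finset.mem_union_left _ hb, h⟩
  have mono2 : ∀ a b, SC.cAdj K₂ a b → SC.cAdj (K₁.union K₂) a b := by
    rintro a b ⟨ha, hb, h⟩
    exact ⟨Finset.mem_union_right _ ha, Finset.mem_union_right _ hb, h⟩
  have hsub : (K₁.union K₂).IsSub K := by
    intro s hs
    rcases Finset.mem_union.mp hs with h | h
    exacts [h₁.1 h, h₂.1 h]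
  have hconn : SC.CompConn (K₁.union K₂) := by
    intro s hs t ht hcard
    rcases Finset.mem_union.mp hs with hs' | hs' <;> rcases Finset.mem_union.mp ht with ht' | ht'
    · exact Relation.ReflTransGen.mono mono1 _ _ (h₁.2.1 s hs' t ht' hcard)
    · obtain ⟨σ, hσ, hσc⟩ := bridge s hs' t ht'
      rw [hcard, min_self] at hσc
      have hσ1 : σ ∈ K₁.faces := (Finset.mem_inter.mp hσ).1
      have hσ2 : σ ∈ K₂.faces := (Finset.mem_inter.mp hσ).2
      exact (Relation.ReflTransGen.mono mono1 _ _ (h₁.2.1 s hs' σ hσ1 (by omega))).trans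
        (Relation.ReflTransGen.mono mono2 _ _ (h₂.2.1 σ hσ2 t ht' (by omega)))
    · obtain ⟨σ, hσ, hσc⟩ := bridge t ht' s hs'
      rw [hcard, min_self] at hσc
      have hσ1 : σ ∈ K₁.faces := (Finset.mem_inter.mp hσ).1
      have hσ2 : σ ∈ K₂.faces := (Finset.mem_inter.mp hσ).2
      exact (Relation.ReflTransGen.mono mono2 _ _ (h₂.2.1 s hs' σ hσ2 (by omega))).trans
        (Relation.ReflTransGen.mono mono1 _ _ (h₁.2.1 σ hσ1 t ht' (by omega)))
    · exact Relation.ReflTransGen.mono mono2 _ _ (h₂.2.1 s hs' t ht' hcard)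
  have e1 := h₁.2.2 _ hsub hconn Finset.subset_union_left
  have e2 := h₂.2.2 _ hsub hconn Finset.subset_union_right
  exact e1.symm.trans e2
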